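/- For every real α > 0 and integers n ≥ 1 and 1 ≤ r ≤ n, define A ∈ R^{(n+1)×n} whose j-th column is e₁ + α e_{j+1} (where e_i ∈ R^{n+1} are the standard basis vectors). Then for every matrix C consisting of any r columns of A: ‖A − C C⁺ A‖_F² = α²(n − r)(1 + 1/(r + α²)), and since ‖A − A₁‖_F² = (n−1)α², it holds that ‖A − C C⁺ A‖_F² / ‖A − A₁‖_F² ≥ ((n−r)/(n−1)) · (1 + 1/(r + α²)). -/

import Mathlib

open Matrix MeasureTheory

noncomputable def frobSq {m n : Type*} [Fintype m] [Fintype n] (A : Matrix m n ℝ) : ℝ :=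
  ∑ i, ∑ j, A i j ^ 2

noncomputable def spec {m n : Type*} [Fintype m] [Fintype n] [DecidableEq n]
    (A : Matrix m n ℝ) : ℝ :=
  ‖LinearMap.toContinuousLinearMap (Matrix.toEuclideanLin A)‖

noncomputable def specErr {m n : Type*} [Fintype m] [Fintype n] [DecidableEq n]
    (A : Matrix m n ℝ) (k : ℕ) : ℝ :=
  sInf {e : ℝ | ∃ X : Matrix m n ℝ, X.rank ≤ k ∧ e = spec (A - X)}

noncomputable def frobSqErr {m n : Type*} [Fintype m] [Fintype n]
    (A : Matrix m n ℝ) (k : ℕ) : ℝ :=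
  sInf {e : ℝ | ∃ X : Matrix m n ℝ, X.rank ≤ k ∧ e = frobSq (A - X)}

noncomputable def specErrIn {m n r : Type*} [Fintype m] [Fintype n] [DecidableEq n]
    [Fintype r] (A : Matrix m n ℝ) (C : Matrix m r ℝ) (k : ℕ) : ℝ :=
  sInf {e : ℝ | ∃ X : Matrix m n ℝ, X.rank ≤ k ∧
    LinearMap.range X.mulVecLin ≤ LinearMap.range C.mulVecLin ∧ e = spec (A - X)}

noncomputable def frobSqErrIn {m n r : Type*} [Fintype m] [Fintype n] [Fintype r]
    (A : Matrix m n ℝ) (C : Matrix m r ℝ) (k : ℕ) : ℝ :=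
  sInf {e : ℝ | ∃ X : Matrix m n ℝ, X.rank ≤ k ∧
    LinearMap.range X.mulVecLin ≤ LinearMap.range C.mulVecLin ∧ e = frobSq (A - X)}

def IsMoorePenrose {m n : Type*} [Fintype m] [Fintype n]
    (M : Matrix m n ℝ) (P : Matrix n m ℝ) : Prop :=
  M * P * M = M ∧ P * M * P = P ∧ (M * P)ᵀ = M * P ∧ (P * M)ᵀ = P * M

/-- The `(n+1) × n` matrix whose `j`-th column is `e₁ + α e_{j+1}`. -/
noncomputable def lowerA (α : ℝ) (n : ℕ) : Matrix (Fin (n + 1)) (Fin n) ℝ :=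
  Matrix.of fun i j => (if (i : ℕ) = 0 then (1 : ℝ) else 0) +
    (if (i : ℕ) = (j : ℕ) + 1 then α else 0)

/- ======================= auxiliary lemmas ======================= -/

lemma BDM.colsum (α : ℝ) (n : ℕ) (u : Fin (n+1) → ℝ) (j : Fin n) :
    ∑ i, lowerA α n i j * u i = u 0 + α * u j.succ := by
  rw [Fin.sum_univ_succ]
  simp [lowerA, Fin.succ_ne_zero, Fin.val_succ, add_mul, Finset.sum_add_distrib,
    Fin.val_inj, Finset.sum_ite_eq', mul_comm]

lemma BDM.specbound (α : ℝ) (n : ℕ) (u : Fin (n+1) → ℝ) :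
    ∑ j : Fin n, (∑ i, lowerA α n i j * u i)^2 ≤ ((n:ℝ) + α^2) * ∑ i, u i ^ 2 := by
  have hCS := Finset.sum_mul_sq_le_sq_mul_sq Finset.univ (fun j : Fin n => u j.succ) (fun _ => 1)
  simp only [mul_one, one_pow, Finset.sum_const, Finset.card_univ, Fintype.card_fin,
    nsmul_eq_mul] at hCS
  have h1 : ∑ j : Fin n, (∑ i, lowerA α n i j * u i)^2
      = ∑ j : Fin n, (u 0 + α * u j.succ)^2 := by
    simp [BDM.colsum]
  have h2 : ∑ i, u i ^ 2 = u 0 ^2 + ∑ j : Fin n, u j.succ ^ 2 := Fin.sum_univ_succ _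
  rw [h1, h2]
  have hexp : ∑ j : Fin n, (u 0 + α * u j.succ)^2
      = (n:ℝ) * u 0^2 + 2*α*u 0 * (∑ j : Fin n, u j.succ) + α^2 * ∑ j : Fin n, u j.succ^2 := by
    rw [Finset.sum_congr rfl fun j (_ : j ∈ Finset.univ) =>
      show (u 0 + α * u j.succ)^2 = u 0^2 + (2*α*u 0)*u j.succ + α^2 * u j.succ^2 from by ring,
      Finset.sum_add_distrib, Finset.sum_add_distrib, ← Finset.mul_sum, ← Finset.mul_sum]
    simp [Finset.sum_const, Finset.card_univ, nsmul_eq_mul]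
  rw [hexp]
  nlinarith [sq_nonneg (α * u 0 - (∑ j : Fin n, u j.succ)), sq_nonneg (u 0),
    Finset.sum_nonneg (fun j (_ : j ∈ (Finset.univ : Finset (Fin n))) => sq_nonneg (u (Fin.succ j)))]

lemma BDM.frobA (α : ℝ) (n : ℕ) : ∑ i, ∑ j, lowerA α n i j ^ 2 = (n:ℝ) * (1 + α^2) := by
  rw [Finset.sum_comm]
  have : ∀ j : Fin n, ∑ i, lowerA α n i j ^ 2 = 1 + α^2 := by
    intro j
    rw [Fin.sum_univ_succ]
    simp [lowerA, Fin.succ_ne_zero, Fin.val_succ, add_sq, Finset.sum_add_distrib,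
      Fin.val_inj, Finset.sum_ite_eq', sq, mul_ite, ite_mul]
  simp [this]; ring

lemma BDM.lb (α : ℝ) (hα : 0 < α) (n : ℕ) (hn : 1 ≤ n) (u : Fin (n+1) → ℝ) (v : Fin n → ℝ) :
    ((n:ℝ) - 1) * α^2 ≤ ∑ i, ∑ j, (lowerA α n i j - u i * v j)^2 := by
  set T := ∑ i, u i ^ 2 with hT
  set S := ∑ j, v j ^ 2 with hS
  set D := ∑ j, v j * (∑ i, lowerA α n i j * u i) with hD
  have hexp : ∑ i, ∑ j, (lowerA α n i j - u i * v j)^2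
      = (n:ℝ) * (1 + α^2) - 2 * D + T * S := by
    have e1 : ∀ i j, (lowerA α n i j - u i * v j)^2
        = lowerA α n i j ^2 - 2 * (v j * (lowerA α n i j * u i)) + u i ^2 * v j ^2 := by
      intro i j; ring
    simp only [e1, Finset.sum_add_distrib, Finset.sum_sub_distrib, ← Finset.mul_sum,
      ← Finset.sum_mul]
    rw [BDM.frobA]
    rw [show (∑ i : Fin (n+1), ∑ j : Fin n, v j * (lowerA α n i j * u i)) = D from by
      rw [hD]; simp only [Finset.mul_sum]; rw [Finset.sum_comm], ← hT, ← hS]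
  rw [hexp]
  have hTnn : 0 ≤ T := Finset.sum_nonneg fun i _ => sq_nonneg _
  have hSnn : 0 ≤ S := Finset.sum_nonneg fun j _ => sq_nonneg _
  have hDsq : D^2 ≤ S * (((n:ℝ) + α^2) * T) := by
    calc D^2 ≤ (∑ j, v j ^2) * (∑ j, (∑ i, lowerA α n i j * u i)^2) := by
          simpa using Finset.sum_mul_sq_le_sq_mul_sq Finset.univ v
            (fun j => ∑ i, lowerA α n i j * u i)
      _ ≤ S * (((n:ℝ) + α^2) * T) := by
          apply mul_le_mul_of_nonneg_left (BDM.specbound α n u) hSnn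
  have hb : (0:ℝ) < (n:ℝ) + α^2 := by positivity
  have hn1 : (1:ℝ) ≤ (n:ℝ) := by exact_mod_cast hn
  nlinarith [sq_nonneg (T * S - ((n:ℝ) + α^2)), sq_nonneg (T * S + ((n:ℝ) + α^2) - 2*D),
    mul_nonneg hTnn hSnn, sq_nonneg (2*D)]

lemma BDM.rank_le_one_decomp {m' n' : Type*} [Fintype m'] [Fintype n'] [DecidableEq n']
    (X : Matrix m' n' ℝ) (h : X.rank ≤ 1) :
    ∃ (u : m' → ℝ) (v : n' → ℝ), ∀ i j, X i j = u i * v j := by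
  rw [Matrix.rank] at h
  obtain ⟨u, hu⟩ := (Submodule.finrank_le_one_iff_isPrincipal _).mp h
  have hmem : ∀ j, X.mulVecLin (Pi.single j 1) ∈ Submodule.span ℝ {u} := fun j => by
    rw [← hu]; exact LinearMap.mem_range_self _ _
  choose c hc using fun j => Submodule.mem_span_singleton.mp (hmem j)
  refine ⟨u, c, fun i j => ?_⟩
  have h2 : X.mulVecLin (Pi.single j 1) i = X i j := by
    simp [Matrix.mulVecLin_apply, Matrix.mulVec_single]
  rw [← h2, ← hc j]; simp [mul_comm]

lemma BDM.rank_le_one_of {m' n' : Type*} [Fintype m'] [Fintype n'] (u : m' → ℝ) (v : n' → ℝ) :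
    (Matrix.of fun i j => u i * v j).rank ≤ 1 := by
  have : (Matrix.of fun i j => u i * v j) = Matrix.replicateCol Unit u * Matrix.replicateRow Unit v := by
    funext i j; simp [Matrix.mul_apply, Matrix.replicateCol, Matrix.replicateRow]
  rw [this]
  exact le_trans (Matrix.rank_mul_le_left _ _)
    (by simpa using Matrix.rank_le_card_width (Matrix.replicateCol Unit u))

lemma BDM.sum_ind {ι κ : Type*} [Fintype ι] [DecidableEq κ] (g : ι → κ)
    (hg : Function.Injective g) (c : ℝ) (x : κ) [Decidable (∃ l, g l = x)] :
    ∑ l, (if g l = x then c else 0) = if ∃ l, g l = x then c else 0 := by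
  by_cases h : ∃ l, g l = x
  · obtain ⟨l₀, hl⟩ := h
    rw [Finset.sum_eq_single l₀]
    · rw [if_pos hl, if_pos ⟨l₀, hl⟩]
    · intro b _ hb
      rw [if_neg]
      intro hbx
      exact hb (hg (hbx.trans hl.symm))
    · simp
  · rw [if_neg h]
    exact Finset.sum_eq_zero fun l _ => if_neg fun hl => h ⟨l, hl⟩

lemma BDM.sum_range_card {ι κ : Type*} [Fintype ι] [Fintype κ] [DecidableEq κ] (g : ι → κ)
    (hg : Function.Injective g) [∀ x, Decidable (∃ l, g l = x)] :
    ∑ x : κ, (if ∃ l, g l = x then (1:ℝ) else 0) = Fintype.card ι := by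
  rw [Finset.sum_boole]
  congr 1
  rw [show (Finset.univ.filter fun x => ∃ l, g l = x) = Finset.univ.image g by
    ext x; simp [eq_comm]]
  rw [Finset.card_image_of_injective _ hg, Finset.card_univ]

/-- **Frobenius norm lower bound, rank-one case** (Lemma 9.2 of
Boutsidis–Drineas–Magdon-Ismail): for the matrix `A` with columns `e₁ + α e_{j+1}` and
any matrix `C` made of `r` of its columns,
`‖A - C C⁺ A‖_F² = α² (n - r)(1 + 1/(r + α²))`, `‖A - A₁‖_F² = (n - 1) α²`, hence
`‖A - C C⁺ A‖_F² / ‖A - A₁‖_F² ≥ ((n - r)/(n - 1)) (1 + 1/(r + α²))`. -/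
theorem frobenius_norm_lower_bound_rank_one
    (α : ℝ) (hα : 0 < α) (n : ℕ) (hn : 1 ≤ n) (r : ℕ) (hr1 : 1 ≤ r) (hrn : r ≤ n)
    (f : Fin r → Fin n) (hf : Function.Injective f)
    (C : Matrix (Fin (n + 1)) (Fin r) ℝ) (hC : C = (lowerA α n).submatrix id f)
    (P : Matrix (Fin r) (Fin (n + 1)) ℝ) (hP : IsMoorePenrose C P) :
    frobSq (lowerA α n - C * P * lowerA α n) =
      α ^ 2 * ((n : ℝ) - (r : ℝ)) * (1 + 1 / ((r : ℝ) + α ^ 2)) ∧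
    frobSqErr (lowerA α n) 1 = ((n : ℝ) - 1) * α ^ 2 ∧
    (((n : ℝ) - (r : ℝ)) / ((n : ℝ) - 1)) * (1 + 1 / ((r : ℝ) + α ^ 2)) ≤
      frobSq (lowerA α n - C * P * lowerA α n) / frobSqErr (lowerA α n) 1 := by
  have hα0 : α ≠ 0 := ne_of_gt hα
  set β : ℝ := (r:ℝ) + α^2 with hβdef
  have hβ : β ≠ 0 := by positivity
  -- ### Part 1
  have part1 : frobSq (lowerA α n - C * P * lowerA α n) =
      α ^ 2 * ((n : ℝ) - (r : ℝ)) * (1 + 1 / β) := by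
    obtain ⟨hCPC, -, hCPt, -⟩ := hP
    set A : Matrix (Fin (n+1)) (Fin n) ℝ := lowerA α n with hA
    set Q : Matrix (Fin (n+1)) (Fin (n+1)) ℝ := C * P with hQ
    have hQC : Q * C = C := hCPC
    have hker : ∀ v : Fin (n+1) → ℝ, Cᵀ.mulVec v = 0 → Q.mulVec v = 0 := by
      intro v hv
      have h1 : Q.mulVec v = (Pᵀ * Cᵀ).mulVec v := by
        rw [← Matrix.transpose_mul, hCPt]
      rw [h1, ← Matrix.mulVec_mulVec, hv, Matrix.mulVec_zero]
    have hfix : ∀ y : Fin r → ℝ, Q.mulVec (C.mulVec y) = C.mulVec y := by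
      intro y; rw [Matrix.mulVec_mulVec, hQC]
    set e0 : Fin (n+1) → ℝ := fun i => if (i:ℕ) = 0 then 1 else 0 with he0
    set ejf : Fin n → Fin (n+1) → ℝ :=
      fun j x => if (x:ℕ) = (j:ℕ) + 1 then 1 else 0 with hejf
    set w : Fin (n+1) → ℝ := C.mulVec (fun _ => 1/β) with hw
    have hCe : ∀ i k, C i k = (if (i:ℕ) = 0 then (1:ℝ) else 0) +
        (if (f k:ℕ) + 1 = (i:ℕ) then α else 0) := by
      intro i k; rw [hC, hA]
      simp only [Matrix.submatrix_apply, id, lowerA, Matrix.of_apply]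
      congr 1
      exact if_congr (eq_comm (a := (i:ℕ)) (b := (f k:ℕ)+1)) rfl rfl
    have hg' : Function.Injective (fun l : Fin r => f l) := hf
    -- explicit formula for w
    have hwe : ∀ i, w i = (1/β) * ((r:ℝ) * (if (i:ℕ) = 0 then 1 else 0)
        + α * (if ∃ k, (f k:ℕ) + 1 = (i:ℕ) then 1 else 0)) := by
      intro i
      have h1 : w i = ∑ l, C i l * (1/β) := by
        rw [hw]; simp [Matrix.mulVec, dotProduct]
      rw [h1]
      simp only [hCe, add_mul, Finset.sum_add_distrib, ite_mul, zero_mul, one_mul]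
      have hginj : Function.Injective (fun l : Fin r => (f l : ℕ) + 1) := by
        intro a b hab
        exact hf (Fin.val_inj.mp (Nat.succ_injective hab))
      rw [BDM.sum_ind (fun l : Fin r => (f l : ℕ) + 1) hginj (α * (1/β)) (i:ℕ)]
      by_cases h3 : (i:ℕ) = 0 <;> by_cases h4 : ∃ k, (f k:ℕ) + 1 = (i:ℕ) <;>
        simp [h3, h4, Finset.sum_const, Finset.card_univ] <;> ring
    have hQw : Q.mulVec w = w := hfix _
    -- Cᵀ (e0 - w) = 0
    have hCtw : Cᵀ.mulVec (e0 - w) = 0 := by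
      funext k
      have h1 : Cᵀ.mulVec (e0 - w) k = ∑ x, C x k * (e0 x - w x) := by
        simp [Matrix.mulVec, dotProduct, Matrix.transpose_apply]
      rw [h1, Fin.sum_univ_succ]
      have hz : C 0 k * (e0 0 - w 0) = 1 - (r:ℝ)/β := by
        rw [hCe, hwe]
        simp [he0]
        field_simp
      have hsucc : ∀ x' : Fin n, C x'.succ k * (e0 x'.succ - w x'.succ)
          = if f k = x' then α * (-(α/β) *
              (if ∃ k', f k' = x' then 1 else 0)) else 0 := by
        intro x'
        rw [hCe, hwe]
        have hc1 : ¬ ((x'.succ : Fin (n+1)) : ℕ) = 0 := by simp [Fin.val_succ]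
        have hc2 : ((f k:ℕ) + 1 = ((x'.succ : Fin (n+1)) : ℕ)) = (f k = x') := by
          simp [Fin.val_succ, Fin.val_inj]
        have hc3 : (∃ k', (f k':ℕ) + 1 = ((x'.succ : Fin (n+1)) : ℕ)) =
            (∃ k', f k' = x') := by
          simp [Fin.val_succ, Fin.val_inj]
        simp only [he0, if_neg hc1, hc2, hc3]
        by_cases h5 : f k = x'
        · by_cases h6 : ∃ k', f k' = x'
          · simp only [if_pos h5, if_pos h6]; ring
          · simp only [if_pos h5, if_neg h6]; ring
        · simp only [if_neg h5]; ring
      rw [Finset.sum_congr rfl fun x' _ => hsucc x']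
      rw [Finset.sum_ite_eq Finset.univ (f k)
        (fun x' => α * (-(α/β) * (if ∃ k', f k' = x' then 1 else 0)))]
      have hex : (∃ k', f k' = f k) := ⟨k, rfl⟩
      simp only [Finset.mem_univ, if_true, if_pos hex, hz, Pi.zero_apply]
      field_simp
      ring
    have hQe0 : Q.mulVec e0 = w := by
      have hsplit : w + (e0 - w) = e0 := by funext x; simp
      calc Q.mulVec e0 = Q.mulVec (w + (e0 - w)) := by rw [hsplit]
        _ = Q.mulVec w + Q.mulVec (e0 - w) := Matrix.mulVec_add _ _ _
        _ = w := by rw [hQw, hker _ hCtw, add_zero]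
    have hQej : ∀ j : Fin n, (¬ ∃ m, f m = j) → Q.mulVec (ejf j) = 0 := by
      intro j hj
      apply hker
      funext k
      have h1 : Cᵀ.mulVec (ejf j) k = ∑ x, C x k * ejf j x := by
        simp [Matrix.mulVec, dotProduct, Matrix.transpose_apply]
      rw [h1, Fin.sum_univ_succ]
      have hz : C 0 k * ejf j 0 = 0 := by simp [hejf]
      have hsucc : ∀ x' : Fin n, C x'.succ k * ejf j x'.succ
          = if f k = x' then (if x' = j then α else 0) else 0 := by
        intro x'
        rw [hCe]
        have hc1 : ¬ ((x'.succ : Fin (n+1)) : ℕ) = 0 := by simp [Fin.val_succ]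
        have hc2 : ((f k:ℕ) + 1 = ((x'.succ : Fin (n+1)) : ℕ)) = (f k = x') := by
          simp [Fin.val_succ, Fin.val_inj]
        have hc4 : (((x'.succ : Fin (n+1)) : ℕ) = (j:ℕ) + 1) = (x' = j) := by
          simp [Fin.val_succ, Fin.val_inj]
        simp only [hejf, if_neg hc1, hc2, hc4]
        by_cases h5 : f k = x'
        · simp only [if_pos h5]; split_ifs <;> ring
        · simp only [if_neg h5]; ring
      rw [hz, zero_add, Finset.sum_congr rfl fun x' _ => hsucc x',
        Finset.sum_ite_eq Finset.univ (f k) (fun x' => if x' = j then α else 0)]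
      have hfkj : f k ≠ j := fun h => hj ⟨k, h⟩
      simp [hfkj]
    -- entry formula for the difference
    have hQA : ∀ i j, (Q * A) i j = Q.mulVec (fun x => A x j) i := by
      intro i j; simp [Matrix.mul_apply, Matrix.mulVec, dotProduct]
    have hdiff : ∀ i j, (A - Q * A) i j =
        (if ∃ m, f m = j then 0 else A i j - w i) := by
      intro i j
      rw [Matrix.sub_apply, hQA]
      by_cases hj : ∃ m, f m = j
      · obtain ⟨m, rfl⟩ := hj
        have hcol : (fun x => A x (f m)) = C.mulVec (Pi.single m 1) := by
          funext x
          rw [Matrix.mulVec_single, hC]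
          simp
        rw [if_pos ⟨m, rfl⟩, hcol, hfix, Matrix.mulVec_single, hC]
        simp
      · rw [if_neg hj]
        have hcol : (fun x => A x j) = e0 + α • ejf j := by
          funext x
          simp [hA, lowerA, he0, hejf, mul_ite]
        rw [hcol, Matrix.mulVec_add, Matrix.mulVec_smul, hQe0, hQej j hj]
        simp
    -- now compute the Frobenius norm
    unfold frobSq
    rw [Finset.sum_comm]
    have hinner : ∀ j : Fin n, ∑ i, ((A - Q * A) i j)^2
        = if ∃ m, f m = j then 0 else α^2 * (1 + 1/β) := by
      intro j
      by_cases hj : ∃ m, f m = j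
      · rw [if_pos hj]
        apply Finset.sum_eq_zero
        intro i _
        rw [hdiff, if_pos hj]
        norm_num
      · rw [if_neg hj]
        rw [Finset.sum_congr rfl fun i _ => by rw [hdiff, if_neg hj]]
        rw [Fin.sum_univ_succ]
        have hz : (A 0 j - w 0)^2 = (1 - (r:ℝ)/β)^2 := by
          rw [hwe]
          simp [hA, lowerA]
          ring
        have hsucc : ∀ x' : Fin n, (A x'.succ j - w x'.succ)^2
            = α^2 * (if x' = j then 1 else 0)
              + (α^2/β^2) * (if ∃ k', f k' = x' then 1 else 0) := by
          intro x'
          rw [hwe]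
          have hc1 : ¬ ((x'.succ : Fin (n+1)) : ℕ) = 0 := by simp [Fin.val_succ]
          have hc3 : (∃ k', (f k':ℕ) + 1 = ((x'.succ : Fin (n+1)) : ℕ)) =
              (∃ k', f k' = x') := by
            simp [Fin.val_succ, Fin.val_inj]
          have hAe : A x'.succ j = if x' = j then α else 0 := by
            simp [hA, lowerA, Fin.val_succ, Fin.val_inj]
          rw [hAe]
          simp only [if_neg hc1, hc3]
          by_cases h5 : x' = j
          · have h6 : ¬ ∃ k', f k' = x' := fun ⟨k', hk'⟩ => hj ⟨k', by rw [hk', h5]⟩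
            simp only [if_pos h5, if_neg h6]; ring
          · by_cases h6 : ∃ k', f k' = x'
            · simp only [if_neg h5, if_pos h6]
              rw [hβdef]
              have hβ2 : ((r:ℝ) + α^2) ≠ 0 := by positivity
              field_simp
              ring
            · simp only [if_neg h5, if_neg h6]; ring
        rw [Finset.sum_congr rfl fun x' _ => hsucc x', Finset.sum_add_distrib,
          ← Finset.mul_sum, ← Finset.mul_sum,
          Finset.sum_ite_eq' Finset.univ j (fun _ => (1:ℝ))]
        have hcard : ∑ x' : Fin n, (if ∃ k', f k' = x' then (1:ℝ) else 0)
            = (r:ℝ) := by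
          rw [BDM.sum_range_card f hf]; simp
        rw [hcard, hz]
        simp only [Finset.mem_univ, if_true, mul_one]
        rw [hβdef]
        have hβ' : (r:ℝ) + α^2 ≠ 0 := by positivity
        field_simp
        ring
    rw [Finset.sum_congr rfl fun j _ => hinner j]
    have hsum : ∑ j : Fin n, (if ∃ m, f m = j then (0:ℝ) else α^2 * (1 + 1/β))
        = ((n:ℝ) - (r:ℝ)) * (α^2 * (1 + 1/β)) := by
      have he : ∀ j : Fin n, (if ∃ m, f m = j then (0:ℝ) else α^2 * (1 + 1/β))
          = α^2 * (1 + 1/β) - (α^2 * (1 + 1/β)) * (if ∃ m, f m = j then 1 else 0) := by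
        intro j; by_cases h : ∃ m, f m = j <;> simp [h]
      rw [Finset.sum_congr rfl fun j _ => he j, Finset.sum_sub_distrib]
      have hcard : ∑ j : Fin n, (if ∃ m, f m = j then (1:ℝ) else 0) = (r:ℝ) := by
        have hcv := BDM.sum_range_card f hf
        rw [Fintype.card_fin] at hcv
        convert hcv using 2
      rw [show (∑ j : Fin n, α^2*(1+1/β) * (if ∃ m, f m = j then (1:ℝ) else 0))
          = α^2*(1+1/β) * (r:ℝ) from by rw [← Finset.mul_sum, hcard]]
      simp [Finset.sum_const, Finset.card_univ]
      ring
    rw [hsum]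
    ring
  -- ### Part 2
  have part2 : frobSqErr (lowerA α n) 1 = ((n : ℝ) - 1) * α ^ 2 := by
    have hnR : (n:ℝ) ≠ 0 := Nat.cast_ne_zero.mpr (by omega)
    set X0 : Matrix (Fin (n+1)) (Fin n) ℝ :=
      Matrix.of fun i j => (if (i:ℕ) = 0 then (1:ℝ) else α/n) * 1 with hX0
    have hfX0 : frobSq (lowerA α n - X0) = ((n:ℝ) - 1) * α^2 := by
      unfold frobSq
      rw [Fin.sum_univ_succ]
      have h0 : ∑ j, ((lowerA α n - X0) 0 j)^2 = 0 := by
        apply Finset.sum_eq_zero; intro j _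
        simp [lowerA, X0, Matrix.sub_apply]
      rw [h0, zero_add]
      have hs : ∀ i' : Fin n, ∑ j, ((lowerA α n - X0) i'.succ j)^2 = α^2 - α^2/n := by
        intro i'
        have he : ∀ j : Fin n, ((lowerA α n - X0) i'.succ j)^2
            = (if i' = j then α^2 - 2*α*(α/n) else 0) + (α/n)^2 := by
          intro j
          by_cases h : i' = j <;>
            simp [lowerA, X0, Matrix.sub_apply, Fin.succ_ne_zero, Fin.val_succ, Fin.val_inj, h] <;>
            ring
        rw [Finset.sum_congr rfl fun j _ => he j, Finset.sum_add_distrib,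
          Finset.sum_ite_eq Finset.univ i' (fun _ => α^2 - 2*α*(α/n))]
        simp [Finset.sum_const, Finset.card_univ]
        field_simp
        ring
      rw [Finset.sum_congr rfl fun i' _ => hs i']
      simp [Finset.sum_const, Finset.card_univ]
      field_simp
    have hmem : ((n:ℝ) - 1) * α^2 ∈
        {e : ℝ | ∃ X : Matrix (Fin (n+1)) (Fin n) ℝ, X.rank ≤ 1 ∧ e = frobSq (lowerA α n - X)} := by
      refine ⟨X0, ?_, hfX0.symm⟩
      exact BDM.rank_le_one_of (fun i : Fin (n+1) => if (i:ℕ) = 0 then (1:ℝ) else α/n) (fun _ : Fin n => (1:ℝ))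
    have hbdd : BddBelow {e : ℝ | ∃ X : Matrix (Fin (n+1)) (Fin n) ℝ,
        X.rank ≤ 1 ∧ e = frobSq (lowerA α n - X)} := by
      refine ⟨0, fun e he => ?_⟩
      obtain ⟨X, _, rfl⟩ := he
      exact Finset.sum_nonneg fun i _ => Finset.sum_nonneg fun j _ => sq_nonneg _
    refine le_antisymm (csInf_le hbdd hmem) (le_csInf ⟨_, hmem⟩ ?_)
    rintro e ⟨X, hX, rfl⟩
    obtain ⟨u, v, huv⟩ := BDM.rank_le_one_decomp X hX
    have : frobSq (lowerA α n - X) = ∑ i, ∑ j, (lowerA α n i j - u i * v j)^2 := by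
      unfold frobSq
      exact Finset.sum_congr rfl fun i _ => Finset.sum_congr rfl fun j _ => by
        rw [Matrix.sub_apply, huv]
    rw [this]
    exact BDM.lb α hα n hn u v
  -- ### Part 3
  refine ⟨part1, part2, ?_⟩
  rw [part1, part2]
  rcases eq_or_lt_of_le hn with h1 | h1
  · have hr : r = 1 := le_antisymm (h1 ▸ hrn) hr1
    subst hr
    rw [← h1]
    norm_num
  · have hn1 : (0:ℝ) < (n:ℝ) - 1 := by
      have : (1:ℝ) < (n:ℝ) := by exact_mod_cast h1
      linarith
    have : α ^ 2 * ((n:ℝ) - (r:ℝ)) * (1 + 1/β) / (((n:ℝ) - 1) * α^2)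
        = (((n:ℝ) - (r:ℝ)) / ((n:ℝ) - 1)) * (1 + 1/β) := by
      field_simp
    rw [this]
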